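/- Let W be a shuffle closed set of colored words, meaning: whenever w ∈ W, any word obtained from w by swapping a barred letter with an adjacent unbarred letter is also in W. Then the quasisymmetric generating functions of W with respect to the big bar order ≺ (all unbarred letters before all barred letters) and with respect to the natural order < coincide: Σ_{w∈W} Q_{Des_≺(w)}(x) = Σ_{w∈W} Q_{Des_<(w)}(x). -/

import Mathlib

open scoped BigOperators
open Classical

noncomputable section

namespace NCS

/-- A colored letter: an element of `Fin N` together with a `Bool` which is
`true` for barred letters and `false` for unbarred letters. -/
abbrev Letter (N : ℕ) := Fin N × Bool

variable {N : ℕ}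

/-- The key of the natural order `1 < 1̄ < 2 < 2̄ < ⋯ < N < N̄`. -/
def natKey (x : Letter N) : ℕ := 2 * x.1.val + (if x.2 then 1 else 0)

/-- The key of the big bar order `1 ≺ ⋯ ≺ N ≺ 1̄ ≺ ⋯ ≺ N̄`. -/
def barKey (N : ℕ) (x : Letter N) : ℕ := if x.2 then N + x.1.val else x.1.val

/-- A shuffle order on the alphabet, encoded by an injective key function which is
increasing on unbarred letters and on barred letters. -/
def IsShuffleKey (key : Letter N → ℕ) : Prop :=
  Function.Injective key ∧
  (∀ a b : Fin N, a < b → key (a, false) < key (b, false)) ∧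
  (∀ a b : Fin N, a < b → key (a, true) < key (b, true))

/-- The free associative `ℤ`-algebra on the alphabet. -/
abbrev FA (N : ℕ) := MonoidAlgebra ℤ (FreeMonoid (Letter N))

/-- The monomial of a colored word. -/
def wrd (w : List (Letter N)) : FA N := MonoidAlgebra.single (FreeMonoid.ofList w) 1

/-- `y ≥' x` : `y > x`, or `y` and `x` are equal barred letters. -/
def colGE (key : Letter N → ℕ) (y x : Letter N) : Prop :=
  key x < key y ∨ (y = x ∧ y.2 = true)

/-- `y ≤'' z` : `y < z`, or `y` and `z` are equal unbarred letters. -/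
def rowLE (key : Letter N → ℕ) (y z : Letter N) : Prop :=
  key y < key z ∨ (y = z ∧ y.2 = false)

/-- `x ≤col y` : `x < y`, or `x` and `y` are equal barred letters. -/
def colLE (key : Letter N → ℕ) (x y : Letter N) : Prop :=
  key x < key y ∨ (x = y ∧ x.2 = true)

/-- The noncommutative super elementary symmetric function `e_k(S)` with letters
restricted to the set `S`. -/
def eSet (key : Letter N → ℕ) (S : Set (Letter N)) (k : ℕ) : FA N :=
  ∑ f ∈ (Finset.univ : Finset (Fin k → Letter N)).filter
      (fun f => (∀ i, f i ∈ S) ∧ ∀ i j : Fin k, (j : ℕ) = (i : ℕ) + 1 → colGE key (f i) (f j)),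
    wrd (List.ofFn f)

/-- The noncommutative super elementary symmetric function `e_k(u)`. -/
def eU (key : Letter N → ℕ) (k : ℕ) : FA N := eSet key Set.univ k

/-- `e_k(u)` with integer index; `0` for negative `k`. -/
def eZ (key : Letter N → ℕ) (k : ℤ) : FA N := if 0 ≤ k then eU key k.toNat else 0

/-- `e_k(S)` with integer index; `0` for negative `k`. -/
def eSetZ (key : Letter N → ℕ) (S : Set (Letter N)) (k : ℤ) : FA N :=
  if 0 ≤ k then eSet key S k.toNat else 0

/-- The noncommutative super homogeneous symmetric function `h_k(u)`. -/
def hU (key : Letter N → ℕ) (k : ℕ) : FA N :=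
  ∑ f ∈ (Finset.univ : Finset (Fin k → Letter N)).filter
      (fun f => ∀ i j : Fin k, (j : ℕ) = (i : ℕ) + 1 → rowLE key (f i) (f j)),
    wrd (List.ofFn f)

/-- The relations generating the two-sided ideal `I_Kron` (with respect to the
natural order; recall `natKey x + 1 = natKey y` says `x = y↓`). -/
inductive kronRel (N : ℕ) : FA N → FA N → Prop
  | rel3 (x y : Letter N) (hy : y.2 = false) (h : natKey x < natKey y) :
      kronRel N (wrd [y, y, x]) (wrd [y, x, y])
  | rel3b (y z : Letter N) (hy : y.2 = false) (h : natKey y < natKey z) :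
      kronRel N (wrd [z, y, y]) (wrd [y, z, y])
  | rel4 (y z : Letter N) (hy : y.2 = true) (h : natKey y < natKey z) :
      kronRel N (wrd [y, y, z]) (wrd [y, z, y])
  | rel4b (x y : Letter N) (hy : y.2 = true) (h : natKey x < natKey y) :
      kronRel N (wrd [x, y, y]) (wrd [y, x, y])
  | rot (x y z : Letter N) (h1 : natKey x + 1 = natKey y) (h2 : natKey y + 1 = natKey z) :
      kronRel N (wrd [x, z, y] - wrd [z, x, y]) (wrd [y, x, z] - wrd [y, z, x])
  | far (x z : Letter N) (h : natKey x + 2 < natKey z) :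
      kronRel N (wrd [x, z]) (wrd [z, x])

/-- The relations generating the ⋖-colored plactic ideal `I_plac^⋖`. -/
inductive placRel (N : ℕ) (key : Letter N → ℕ) : FA N → FA N → Prop
  | k1 (x y z : Letter N) (h1 : key x < key y) (h2 : key y < key z) :
      placRel N key (wrd [x, z, y]) (wrd [z, x, y])
  | k2 (x y z : Letter N) (h1 : key x < key y) (h2 : key y < key z) :
      placRel N key (wrd [y, x, z]) (wrd [y, z, x])
  | k3 (x y : Letter N) (hy : y.2 = false) (h : key x < key y) :
      placRel N key (wrd [y, y, x]) (wrd [y, x, y])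
  | k3b (y z : Letter N) (hy : y.2 = false) (h : key y < key z) :
      placRel N key (wrd [z, y, y]) (wrd [y, z, y])
  | k4 (y z : Letter N) (hy : y.2 = true) (h : key y < key z) :
      placRel N key (wrd [y, y, z]) (wrd [y, z, y])
  | k4b (x y : Letter N) (hy : y.2 = true) (h : key x < key y) :
      placRel N key (wrd [x, y, y]) (wrd [y, x, y])

/-- The relations generating the ideal `I_kronknuth`. -/
inductive kkRel (N : ℕ) : FA N → FA N → Prop
  | rel3 (x y : Letter N) (hy : y.2 = false) (h : natKey x < natKey y) :
      kkRel N (wrd [y, y, x]) (wrd [y, x, y])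
  | rel3b (y z : Letter N) (hy : y.2 = false) (h : natKey y < natKey z) :
      kkRel N (wrd [z, y, y]) (wrd [y, z, y])
  | rel4 (y z : Letter N) (hy : y.2 = true) (h : natKey y < natKey z) :
      kkRel N (wrd [y, y, z]) (wrd [y, z, y])
  | rel4b (x y : Letter N) (hy : y.2 = true) (h : natKey x < natKey y) :
      kkRel N (wrd [x, y, y]) (wrd [y, x, y])
  | rot (x y z : Letter N) (h1 : natKey x + 1 = natKey y) (h2 : natKey y + 1 = natKey z) :
      kkRel N (wrd [x, z, y] - wrd [z, x, y]) (wrd [y, x, z] - wrd [y, z, x])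
  | kk1 (x y z : Letter N) (h1 : natKey x < natKey y) (h2 : natKey y < natKey z)
      (h3 : natKey x + 2 < natKey z) :
      kkRel N (wrd [x, z, y]) (wrd [z, x, y])
  | kk2 (x y z : Letter N) (h1 : natKey x < natKey y) (h2 : natKey y < natKey z)
      (h3 : natKey x + 2 < natKey z) :
      kkRel N (wrd [y, x, z]) (wrd [y, z, x])

end NCS
namespace NCS

variable {N : ℕ}

/-- The ordinary word `w^r`: barred letters shuffled to the right, that subword
reversed and de-barred.  Letters are recorded `1`-indexed. -/
def plainr (w : List (Letter N)) : List ℕ :=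
  (w.filter (fun x => !x.2)).map (fun x => x.1.val + 1) ++
    ((w.filter (fun x => x.2)).reverse).map (fun x => x.1.val + 1)

/-- The number of barred letters of a colored word. -/
def barredCount (w : List (Letter N)) : ℕ := (w.filter (fun x => x.2)).length

/-- An ordinary word (in the `1`-indexed alphabet) is Yamanouchi of content `lam`
(`lam i` = multiplicity of the letter `i+1`). -/
def IsYamOf (lam : ℕ → ℕ) (u : List ℕ) : Prop :=
  (∀ i : ℕ, u.count (i + 1) = lam i) ∧
    ∀ t i : ℕ, (u.drop t).count (i + 2) ≤ (u.drop t).count (i + 1)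

/-- An ordinary word is Yamanouchi (of some content). -/
def IsYamWord (u : List ℕ) : Prop :=
  ∀ t i : ℕ, (u.drop t).count (i + 2) ≤ (u.drop t).count (i + 1)

/-- The set of colored Yamanouchi words of content `lam` with exactly `d` barred letters. -/
def CYW (N : ℕ) (lam : ℕ → ℕ) (d : ℕ) : Set (List (Letter N)) :=
  {w | IsYamOf lam (plainr w) ∧ barredCount w = d}

/-- `CYW` as a finset (all its members have length `n = Σ lam`). -/
def CYWfin (N : ℕ) (lam : ℕ → ℕ) (d n : ℕ) : Finset (List (Letter N)) :=
  ((Finset.univ : Finset (Fin n → Letter N)).image List.ofFn).filter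
    (fun w => w ∈ CYW N lam d)

/-- A set of colored words is shuffle closed. -/
def ShuffleClosed (W : Set (List (Letter N))) : Prop :=
  ∀ (u v : List (Letter N)) (x y : Letter N), x.2 ≠ y.2 →
    (u ++ x :: y :: v) ∈ W → (u ++ y :: x :: v) ∈ W

/-- The ⋖-descent set of a colored word (`0`-indexed positions). -/
def DesSet (key : Letter N → ℕ) (w : List (Letter N)) : Set ℕ :=
  {i | ∃ h : i + 1 < w.length,
    key (w.get ⟨i + 1, h⟩) < key (w.get ⟨i, Nat.lt_of_succ_lt h⟩) ∨
      (w.get ⟨i, Nat.lt_of_succ_lt h⟩ = w.get ⟨i + 1, h⟩ ∧ (w.get ⟨i + 1, h⟩).2 = true)}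

/-- Coefficient of the monomial `m` in Gessel's fundamental quasisymmetric
function `Q_S` for words of length `t`. -/
def Qcoeff (t : ℕ) (S : Set ℕ) (m : ℕ →₀ ℕ) : ℤ :=
  Nat.card {i : Fin t → ℕ //
    (∀ j k : Fin t, j ≤ k → i j ≤ i k) ∧
    (∀ j k : Fin t, (k : ℕ) = (j : ℕ) + 1 → (j : ℕ) ∈ S → i j < i k) ∧
    (∀ v : ℕ, m v = (Finset.univ.filter (fun j : Fin t => i j = v)).card)}

/-- Gessel's fundamental quasisymmetric function as a power series in the
variables `x_0, x_1, …`. -/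
def Qqs (t : ℕ) (S : Set ℕ) : MvPowerSeries ℕ ℤ := fun m => Qcoeff t S m

/-- The boxes of the (possibly restricted) shape with column lengths bounded by
`rows` and row lengths given by `nu`. -/
def shapeFin (nu : ℕ → ℕ) (rows : ℕ) : Finset (ℕ × ℕ) :=
  (Finset.range rows ×ˢ Finset.range (nu 0)).filter (fun p => p.2 < nu p.1)

/-- `E` is a ⋖-colored tableau of shape `nu` (rows weakly increase with equal
letters unbarred; columns weakly increase with equal letters barred). -/
def IsCT (key : Letter N → ℕ) (nu : ℕ → ℕ) (E : ℕ × ℕ → Letter N) : Prop :=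
  (∀ r c : ℕ, c + 1 < nu r → rowLE key (E (r, c)) (E (r, c + 1))) ∧
  (∀ r c : ℕ, c < nu (r + 1) → colLE key (E (r, c)) (E (r + 1, c)))

/-- Pad a partition given on `Fin n` to a function on `ℕ`. -/
def padF {n : ℕ} (f : Fin n → ℕ) : ℕ → ℕ := fun i => if h : i < n then f ⟨i, h⟩ else 0

/-- Extend a filling of the shape to all of `ℕ × ℕ` by a junk letter. -/
def extT (nu : ℕ → ℕ) (rows : ℕ) (junk : Letter N)
    (T : {p : ℕ × ℕ // p ∈ shapeFin nu rows} → Letter N) : ℕ × ℕ → Letter N :=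
  fun p => if h : p ∈ shapeFin nu rows then T ⟨p, h⟩ else junk

/-- The reading word `sqread`: diagonals from southwest to northeast; on each
diagonal the unbarred entries are read in the ↖ direction followed by the barred
entries in the ↘ direction. -/
def sqread (nu : ℕ → ℕ) (rows : ℕ) (E : ℕ × ℕ → Letter N) : List (Letter N) :=
  (List.range (rows + nu 0)).flatMap (fun k =>
    let boxes : List (ℕ × ℕ) := (List.range rows).filterMap (fun (r : ℕ) =>
      let c : ℤ := (r : ℤ) + (k : ℤ) - (rows : ℤ) + 1
      if 0 ≤ c ∧ c.toNat < nu r then some (r, c.toNat) else none)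
    ((boxes.filter (fun b => !(E b).2)).reverse ++ boxes.filter (fun b => (E b).2)).map E)

/-- The column reading word: columns read bottom to top, leftmost column first. -/
def colword (nu : ℕ → ℕ) (rows : ℕ) (E : ℕ × ℕ → Letter N) : List (Letter N) :=
  (List.range (nu 0)).flatMap (fun c =>
    ((List.range rows).filter (fun r => decide (c < nu r))).reverse.map (fun r => E (r, c)))

/-- The Kostka number: semistandard Young tableaux of shape `nu` and content `m`
(entries `1`-indexed; entry `i+1` corresponds to the variable `x_i`). -/
def kostka (nu : ℕ → ℕ) (m : ℕ →₀ ℕ) : ℤ :=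
  Nat.card {T : ℕ × ℕ → ℕ //
    (∀ r c : ℕ, c + 1 < nu r → T (r, c) ≤ T (r, c + 1)) ∧
    (∀ r c : ℕ, c < nu (r + 1) → T (r, c) < T (r + 1, c)) ∧
    (∀ r c : ℕ, c < nu r → 1 ≤ T (r, c)) ∧
    (∀ r c : ℕ, ¬ c < nu r → T (r, c) = 0) ∧
    (∀ i : ℕ, (m i : ℕ) = Nat.card {p : ℕ × ℕ // p.2 < nu p.1 ∧ T p = i + 1})}

/-- The parts of a partition of `n`, as a weakly decreasing list. -/
def partList {n : ℕ} (ν : Nat.Partition n) : List ℕ := (ν.parts.sort (· ≤ ·)).reverse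

/-- The parts of a partition of `n`, as a function `ℕ → ℕ` (`0`-indexed). -/
def partFun {n : ℕ} (ν : Nat.Partition n) : ℕ → ℕ := fun i => (partList ν).getD i 0

/-- The conjugate partition: `ν'_j = #{i < rows : ν_i ≥ j}`. -/
def conjP (nu : ℕ → ℕ) (j : ℕ) (rows : ℕ) : ℕ :=
  ((Finset.range rows).filter (fun i => j ≤ nu i)).card

/-- The noncommutative super Schur function
`𝔍_ν(u) = Σ_{π ∈ S_t} sgn(π) e_{ν'_1+π(1)-1}(u) ⋯ e_{ν'_t+π(t)-t}(u)`, `t = ν_1`. -/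
def JncF (key : Letter N → ℕ) (nu : ℕ → ℕ) (rows : ℕ) : FA N :=
  ∑ π : Equiv.Perm (Fin (nu 0)),
    (Equiv.Perm.sign π : ℤ) •
      (List.ofFn (fun i : Fin (nu 0) =>
        eZ key ((conjP nu (i.1 + 1) rows : ℤ) + ((π i).1 : ℤ) - (i.1 : ℤ)))).prod

end NCS
namespace NCS

variable {N : ℕ}

/-- A partition diagram (as a set of `0`-indexed boxes). -/
def IsPartitionDiagram (P : Finset (ℕ × ℕ)) : Prop :=
  ∀ p ∈ P, ∀ q : ℕ × ℕ, q.1 ≤ p.1 → q.2 ≤ p.2 → q ∈ P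

/-- `p ≤ q` in the northeast order: `q.1 ≤ p.1` and `p.2 ≤ q.2`. -/
def neLE (p q : ℕ × ℕ) : Prop := q.1 ≤ p.1 ∧ p.2 ≤ q.2

/-- A restricted shape: a lower order ideal of a partition diagram for the
northeast order. -/
def IsRestrictedShape (D : Finset (ℕ × ℕ)) : Prop :=
  ∃ P : Finset (ℕ × ℕ), IsPartitionDiagram P ∧ D ⊆ P ∧
    ∀ p ∈ P, ∀ q ∈ D, neLE p q → p ∈ D

/-- A restricted colored tableau (for the natural order). -/
structure RCT (N : ℕ) where
  shape : Finset (ℕ × ℕ)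
  restricted : IsRestrictedShape shape
  entry : ℕ × ℕ → Letter N
  row : ∀ r c : ℕ, (r, c) ∈ shape → (r, c + 1) ∈ shape →
    natKey (entry (r, c)) < natKey (entry (r, c + 1)) ∨
      (entry (r, c) = entry (r, c + 1) ∧ (entry (r, c)).2 = false)
  col : ∀ r c : ℕ, (r, c) ∈ shape → (r + 1, c) ∈ shape →
    natKey (entry (r, c)) < natKey (entry (r + 1, c)) ∨
      (entry (r, c) = entry (r + 1, c) ∧ (entry (r, c)).2 = true)

/-- A ↖ arrow of `R` from the box `tail` (containing `a+1`) to the box `head`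
(containing `a`); the two boxes are opposite corners of a rectangle whose
intersection with the shape is an arrow subtableau. -/
def nwArrow (R : RCT N) (tail head : ℕ × ℕ) : Prop :=
  head ∈ R.shape ∧ tail ∈ R.shape ∧ head.1 < tail.1 ∧ head.2 < tail.2 ∧
  (∃ a b : Fin N, R.entry head = (a, false) ∧ R.entry tail = (b, false) ∧
    (b : ℕ) = (a : ℕ) + 1) ∧
  ((tail.1 = head.1 + 1 ∧ tail.2 = head.2 + 1 ∧ (tail.1, head.2) ∈ R.shape) ∨
   (head.1 + 1 < tail.1 ∧
    (∀ p ∈ R.shape, head.1 ≤ p.1 → p.1 ≤ tail.1 → head.2 ≤ p.2 → p.2 ≤ tail.2 →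
      p.2 = head.2 ∨ p.1 = tail.1) ∧
    (∀ r : ℕ, head.1 ≤ r → r ≤ tail.1 → (r, head.2) ∈ R.shape) ∧
    (∀ c : ℕ, head.2 ≤ c → c ≤ tail.2 → (tail.1, c) ∈ R.shape)))

/-- A ↘ arrow of `R` from the box `tail` (containing `ā`) to the box `head`
(containing `(a+1)`-bar). -/
def seArrow (R : RCT N) (tail head : ℕ × ℕ) : Prop :=
  tail ∈ R.shape ∧ head ∈ R.shape ∧ tail.1 < head.1 ∧ tail.2 < head.2 ∧
  (∃ a b : Fin N, R.entry tail = (a, true) ∧ R.entry head = (b, true) ∧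
    (b : ℕ) = (a : ℕ) + 1) ∧
  ((head.1 = tail.1 + 1 ∧ head.2 = tail.2 + 1 ∧ (head.1, tail.2) ∈ R.shape) ∨
   (tail.2 + 1 < head.2 ∧
    (∀ p ∈ R.shape, tail.1 ≤ p.1 → p.1 ≤ head.1 → tail.2 ≤ p.2 → p.2 ≤ head.2 →
      p.2 = tail.2 ∨ p.1 = head.1) ∧
    (∀ r : ℕ, tail.1 ≤ r → r ≤ head.1 → (r, tail.2) ∈ R.shape) ∧
    (∀ c : ℕ, tail.2 ≤ c → c ≤ head.2 → (head.1, c) ∈ R.shape)))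

/-- A box is the tail of an arrow of `R`. -/
def IsArrowTail (R : RCT N) (β : ℕ × ℕ) : Prop :=
  (∃ h, nwArrow R β h) ∨ (∃ h, seArrow R β h)

/-- A box which is maximal in `D` for the northeast order. -/
def NEMaximal (D : Finset (ℕ × ℕ)) (β : ℕ × ℕ) : Prop :=
  β ∈ D ∧ ∀ q ∈ D, neLE β q → q = β

/-- `L` is an arrow respecting reading order of the RCT `R`: an enumeration of
the boxes compatible with the northeast order, reading every arrow tail before
the corresponding head. -/
def IsARWord (R : RCT N) (L : List (ℕ × ℕ)) : Prop :=
  L.Nodup ∧ (∀ β : ℕ × ℕ, β ∈ L ↔ β ∈ R.shape) ∧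
  (∀ β β' : ℕ × ℕ, β ∈ L → β' ∈ L → neLE β β' → β ≠ β' →
    L.idxOf β < L.idxOf β') ∧
  (∀ t h : ℕ × ℕ, nwArrow R t h ∨ seArrow R t h → L.idxOf t < L.idxOf h)

end NCS
namespace NCS

variable {N : ℕ}

/-! ### Word conversion -/

/-- Rotate a list once to the right. -/
def rotR {α : Type*} (l : List α) : List α := l.rotate (l.length - 1)

/-- Word conversion: fix all letters not satisfying `p` and rotate each maximal
consecutive run of letters satisfying `p` once to the right. -/
def conv {α : Type*} (p : α → Bool) : List α → List α
  | [] => []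
  | x :: xs =>
    if p x = true then
      rotR ((x :: xs).takeWhile p) ++ conv p (xs.dropWhile p)
    else x :: conv p xs
termination_by l => l.length
decreasing_by
  · exact Nat.lt_succ_of_le ((List.dropWhile_suffix p).length_le)
  · exact Nat.lt_succ_self _

/-! ### Ordinary RSK insertion -/

/-- Row bumping: insert `x` into a weakly increasing row, bumping the leftmost
entry strictly greater than `x`. -/
def bumpRow : List ℕ → ℕ → List ℕ × Option ℕ
  | [], x => ([x], none)
  | y :: ys, x =>
    if x < y then (x :: ys, some y)
    else
      let p := bumpRow ys x
      (y :: p.1, p.2)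

/-- Schensted insertion of a letter into a tableau (given as its list of rows). -/
def insertEntry : List (List ℕ) → ℕ → List (List ℕ)
  | [], x => [[x]]
  | row :: rest, x =>
    match bumpRow row x with
    | (row', none) => row' :: rest
    | (row', some y) => row' :: insertEntry rest y

/-- The insertion tableau of an ordinary word. -/
def insertionTableau (w : List ℕ) : List (List ℕ) := w.foldl insertEntry []

/-- A tableau (list of rows) is superstandard: row `i` is filled with `i+1`'s
(`1`-indexed letters). -/
def IsSuperstandard (Q : List (List ℕ)) : Prop :=
  ∀ i : ℕ, ∀ h : i < Q.length, ∀ v ∈ Q.get ⟨i, h⟩, v = i + 1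

/-! ### Standardization -/

/-- The ⋖-standardization of a colored word: occurrences of each letter are
relabelled, smallest letter first, left to right for unbarred letters and
right to left for barred letters, by `1, 2, …`. -/
def stdz (key : Letter N → ℕ) (w : List (Letter N)) : List ℕ :=
  (List.finRange w.length).map (fun i =>
    ((List.finRange w.length).filter
        (fun j => decide (key (w.get j) < key (w.get i)))).length +
    (if (w.get i).2 then
        ((List.finRange w.length).filter
          (fun j => decide (i < j ∧ w.get j = w.get i))).length
      else
        ((List.finRange w.length).filter
          (fun j => decide (j < i ∧ w.get j = w.get i))).length) + 1)

/-- The free `ℤ`-algebra on the ordinary (unbarred) alphabet `ℕ`. -/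
abbrev FAO := MonoidAlgebra ℤ (FreeMonoid ℕ)

/-- The monomial of an ordinary word. -/
def wrdO (w : List ℕ) : FAO := MonoidAlgebra.single (FreeMonoid.ofList w) 1

/-- The ordinary Knuth (plactic) relations. -/
inductive knuthRel : FAO → FAO → Prop
  | k1 (a b c : ℕ) (h1 : a < b) (h2 : b < c) : knuthRel (wrdO [a, c, b]) (wrdO [c, a, b])
  | k2 (a b c : ℕ) (h1 : a < b) (h2 : b < c) : knuthRel (wrdO [b, a, c]) (wrdO [b, c, a])
  | k3 (a b : ℕ) (h : a < b) : knuthRel (wrdO [b, b, a]) (wrdO [b, a, b])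
  | k4 (b c : ℕ) (h : b < c) : knuthRel (wrdO [c, b, b]) (wrdO [b, c, b])

/-! ### Pairing, the noncommutative Cauchy product, symmetric series -/

/-- The bilinear pairing on `U` for which the colored words are orthonormal. -/
def pairU (f g : FA N) : ℤ := ∑ w ∈ f.coeff.support, f.coeff w * g.coeff w

/-- Coefficient of `x^m` in the noncommutative Cauchy product
`Ω(x,u) = Π_j (c_{z_1}(x_j) ⋯ c_{z_{2N}}(x_j))`: the product of the `h_{m_j}(u)`
in increasing order of `j`. -/
def OmegaC (key : Letter N → ℕ) (m : ℕ →₀ ℕ) : FA N :=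
  ((m.support.sort (· ≤ ·)).map (fun j => hU key (m j))).prod

/-- Total degree of a monomial. -/
def degM (m : ℕ →₀ ℕ) : ℕ := m.sum fun _ k => k

/-- Coefficient of `x^m` in the monomial symmetric function `m_ν`. -/
def mCoeff {k : ℕ} (ν : Nat.Partition k) (m : ℕ →₀ ℕ) : ℤ :=
  if Multiset.map (fun j => m j) m.support.val = ν.parts then 1 else 0

/-- `h_ν(u) = h_{ν_1}(u) h_{ν_2}(u) ⋯`. -/
def hProd (key : Letter N → ℕ) (L : List ℕ) : FA N := (L.map (hU key)).prod

/-- Coefficient of `x^m` in `F_γ(x) = Σ_w γ_w Q_{Des(w)}(x)`. -/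
def FgammaC (key : Letter N → ℕ) (γ : FA N) (m : ℕ →₀ ℕ) : ℤ :=
  ∑ w ∈ γ.coeff.support, γ.coeff w *
    Qcoeff (FreeMonoid.toList w).length (DesSet key (FreeMonoid.toList w)) m

/-- A series (given by its coefficients) is symmetric. -/
def SymmSeries (F : (ℕ →₀ ℕ) → ℤ) : Prop :=
  ∀ σ : Equiv.Perm ℕ, ∀ m : ℕ →₀ ℕ, F (Finsupp.mapDomain σ m) = F m

/-! ### Characters of symmetric groups and Kronecker coefficients -/

/-- The power sum polynomial `p_k` in `n` variables. -/
def powS (n k : ℕ) : MvPolynomial (Fin n) ℤ := ∑ j : Fin n, MvPolynomial.X j ^ k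

/-- The Vandermonde alternant `a_δ = Σ_σ sgn(σ) Π_i x_{σ(i)}^{n-1-i}`. -/
def aDelta (n : ℕ) : MvPolynomial (Fin n) ℤ :=
  ∑ σ : Equiv.Perm (Fin n),
    (Equiv.Perm.sign σ : ℤ) • ∏ i : Fin n, MvPolynomial.X (σ i) ^ (n - 1 - (i : ℕ))

/-- The irreducible character `χ^λ` of `S_n` evaluated at `σ`, via the Frobenius
character formula: the coefficient of `x^{λ+δ}` in `a_δ · p_{cycleType σ}`. -/
def chi (n : ℕ) (lam : Fin n → ℕ) (σ : Equiv.Perm (Fin n)) : ℤ :=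
  MvPolynomial.coeff
    (Finsupp.equivFunOnFinite.symm (fun i : Fin n => lam i + (n - 1 - (i : ℕ))))
    (aDelta n * (σ.cycleType.map (fun k => powS n k)).prod)

/-- The hook partition `μ(d) = (n-d, 1^d)`, as a function on `Fin n`. -/
def hookP (n d : ℕ) : Fin n → ℕ :=
  fun i => if (i : ℕ) = 0 then n - d else if (i : ℕ) ≤ d then 1 else 0

/-- `n!` times the Kronecker coefficient `g_{λμν}`, via
`g = (1/n!) Σ_σ χ^λ(σ) χ^μ(σ) χ^ν(σ)`. -/
def kronC (n : ℕ) (lam mu nu : Fin n → ℕ) : ℤ :=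
  ∑ σ : Equiv.Perm (Fin n), chi n lam σ * chi n mu σ * chi n nu σ

/-! ### Power series in `s` and `t` over `U/I_kronknuth` -/

/-- The quotient `U/I_kronknuth`. -/
abbrev QKK (N : ℕ) := RingQuot (kkRel N)

/-- The image of a generator in `U/I_kronknuth`. -/
def uQ (x : Letter N) : QKK N := RingQuot.mkRingHom (kkRel N) (wrd [x])

/-- A power series in `s` (variable `0`) only. -/
def serS (c : ℕ → QKK N) : MvPowerSeries (Fin 2) (QKK N) :=
  fun m => if m 1 = 0 then c (m 0) else 0

/-- A power series in `t` (variable `1`) only. -/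
def serT (c : ℕ → QKK N) : MvPowerSeries (Fin 2) (QKK N) :=
  fun m => if m 0 = 0 then c (m 1) else 0

/-- A constant power series. -/
def constSer (a : QKK N) : MvPowerSeries (Fin 2) (QKK N) :=
  fun m => if m = 0 then a else 0

/-- `f_x = 1 + u_x s` (`x` unbarred), `(1 - u_x s)⁻¹ = Σ_k u_x^k s^k` (`x` barred). -/
def fSer (x : Letter N) : MvPowerSeries (Fin 2) (QKK N) :=
  serS (fun k => if x.2 then uQ x ^ k else if k = 0 then 1 else if k = 1 then uQ x else 0)

/-- The inverse of `f_x`. -/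
def fSerInv (x : Letter N) : MvPowerSeries (Fin 2) (QKK N) :=
  serS (fun k => if x.2 then (if k = 0 then 1 else if k = 1 then -uQ x else 0)
    else (-uQ x) ^ k)

/-- `g_z = 1 + u_z t` (`z` unbarred), `(1 - u_z t)⁻¹` (`z` barred). -/
def gSer (z : Letter N) : MvPowerSeries (Fin 2) (QKK N) :=
  serT (fun k => if z.2 then uQ z ^ k else if k = 0 then 1 else if k = 1 then uQ z else 0)

/-- The inverse of `g_z`. -/
def gSerInv (z : Letter N) : MvPowerSeries (Fin 2) (QKK N) :=
  serT (fun k => if z.2 then (if k = 0 then 1 else if k = 1 then -uQ z else 0)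
    else (-uQ z) ^ k)

end NCS
namespace NCS

variable {N : ℕ}

/-! ## Monotone sequences with given content -/
def MonoF {t : ℕ} (i : Fin t → ℕ) : Prop := ∀ j k : Fin t, j ≤ k → i j ≤ i k
def ContF {t : ℕ} (m : ℕ →₀ ℕ) (i : Fin t → ℕ) : Prop :=
  ∀ v : ℕ, m v = (Finset.univ.filter (fun j => i j = v)).card
def StrictF {t : ℕ} (S : Set ℕ) (i : Fin t → ℕ) : Prop :=
  ∀ j k : Fin t, (k : ℕ) = (j : ℕ) + 1 → (j : ℕ) ∈ S → i j < i k

theorem mono_mem_iff {t : ℕ} {F : Fin t → ℕ} (hF : MonoF F) (v : ℕ) (j : Fin t) :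
    F j ≤ v ↔ (j : ℕ) < (Finset.univ.filter (fun k => F k ≤ v)).card := by
  constructor
  · intro hj
    have hsub : Finset.Iic j ⊆ Finset.univ.filter (fun k => F k ≤ v) := by
      intro k hk
      simp only [Finset.mem_Iic] at hk
      simp only [Finset.mem_filter, Finset.mem_univ, true_and]
      exact le_trans (hF k j hk) hj
    have h1 := Finset.card_le_card hsub
    rw [Fin.card_Iic] at h1
    omega
  · intro hj
    by_contra hc
    have hsub : Finset.univ.filter (fun k => F k ≤ v) ⊆ Finset.Iio j := by
      intro k hk
      simp only [Finset.mem_filter, Finset.mem_univ, true_and] at hk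
      simp only [Finset.mem_Iio]
      by_contra hk2
      exact hc (le_trans (hF j k (not_lt.mp hk2)) hk)
    have h1 := Finset.card_le_card hsub
    rw [Fin.card_Iio] at h1
    omega

theorem mono_unique {t : ℕ} {i i' : Fin t → ℕ} (hM : MonoF i) (hM' : MonoF i')
    (h : ∀ v, (Finset.univ.filter (fun j => i j = v)).card
        = (Finset.univ.filter (fun j => i' j = v)).card) :
    i = i' := by
  have hle : ∀ v, (Finset.univ.filter (fun j : Fin t => i j ≤ v)).card
      = (Finset.univ.filter (fun j => i' j ≤ v)).card := by
    intro v
    induction v with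
    | zero => simpa [Nat.le_zero] using h 0
    | succ v ih =>
      have e1 : ∀ (F : Fin t → ℕ),
          (Finset.univ.filter (fun j : Fin t => F j ≤ v + 1))
            = (Finset.univ.filter (fun j => F j ≤ v)) ∪ (Finset.univ.filter (fun j => F j = v + 1)) := by
        intro F; ext j
        simp only [Finset.mem_filter, Finset.mem_univ, true_and, Finset.mem_union]
        omega
      have d1 : ∀ (F : Fin t → ℕ),
          Disjoint (Finset.univ.filter (fun j : Fin t => F j ≤ v)) (Finset.univ.filter (fun j => F j = v + 1)) := by
        intro F
        rw [Finset.disjoint_left]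
        intro a ha hb
        simp only [Finset.mem_filter, Finset.mem_univ, true_and] at ha hb
        omega
      rw [e1 i, e1 i', Finset.card_union_of_disjoint (d1 i), Finset.card_union_of_disjoint (d1 i'), ih, h (v+1)]
  funext j
  have h1 : i j ≤ i' j := by
    rw [mono_mem_iff hM, hle]
    exact (mono_mem_iff hM' _ j).mp le_rfl
  have h2 : i' j ≤ i j := by
    rw [mono_mem_iff hM', ← hle]
    exact (mono_mem_iff hM _ j).mp le_rfl
  omega

/-! ## rowLE lemmas -/
theorem rowLE_trans {key : Letter N → ℕ} {x y z : Letter N}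
    (h1 : rowLE key x y) (h2 : rowLE key y z) : rowLE key x z := by
  rcases h1 with h1 | ⟨rfl, hx⟩
  · rcases h2 with h2 | ⟨rfl, hy⟩
    · exact Or.inl (h1.trans h2)
    · exact Or.inl h1
  · exact h2

theorem rowLE_iff_not_descent {key : Letter N → ℕ} (hinj : Function.Injective key)
    (a b : Letter N) :
    rowLE key a b ↔ ¬(key b < key a ∨ (a = b ∧ b.2 = true)) := by
  constructor
  · rintro (h | ⟨rfl, ha⟩) <;> rintro (hd | ⟨he, hb⟩)
    · omega
    · subst he; omega
    · omega
    · rw [ha] at hb; exact Bool.false_ne_true hb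
  · intro hd
    push_neg at hd
    obtain ⟨h1, h2⟩ := hd
    rcases Nat.lt_or_ge (key a) (key b) with h | h
    · exact Or.inl h
    · have he : a = b := hinj (le_antisymm h1 h)
      refine Or.inr ⟨he, ?_⟩
      have := h2 he
      rw [he]
      exact Bool.not_eq_true _ |>.mp this

/-! ## Qcoeff as indicator -/

theorem Qcoeff_eq_ite (t : ℕ) (S : Set ℕ) (m : ℕ →₀ ℕ) :
    Qcoeff t S m
      = if (∃ i : Fin t → ℕ, MonoF i ∧ StrictF S i ∧ ContF m i) then 1 else 0 := by
  unfold Qcoeff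
  split_ifs with h
  · obtain ⟨i0, hM, hS, hC⟩ := h
    have hu : Nat.card {i : Fin t → ℕ //
        (∀ j k : Fin t, j ≤ k → i j ≤ i k) ∧
        (∀ j k : Fin t, (k : ℕ) = (j : ℕ) + 1 → (j : ℕ) ∈ S → i j < i k) ∧
        (∀ v : ℕ, m v = (Finset.univ.filter (fun j : Fin t => i j = v)).card)} = 1 := by
      rw [Nat.card_eq_one_iff_unique]
      constructor
      · constructor
        intro a b
        apply Subtype.ext
        exact mono_unique a.2.1 b.2.1 (fun v => by rw [← a.2.2.2 v, ← b.2.2.2 v])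
      · exact ⟨⟨i0, hM, hS, hC⟩⟩
    rw [hu]; rfl
  · have he : IsEmpty {i : Fin t → ℕ //
        (∀ j k : Fin t, j ≤ k → i j ≤ i k) ∧
        (∀ j k : Fin t, (k : ℕ) = (j : ℕ) + 1 → (j : ℕ) ∈ S → i j < i k) ∧
        (∀ v : ℕ, m v = (Finset.univ.filter (fun j : Fin t => i j = v)).card)} :=
      ⟨fun x => h ⟨x.1, x.2.1, x.2.2.1, x.2.2.2⟩⟩
    rw [@Nat.card_of_isEmpty _ he]; rfl

/-! ## Compatibility -/
def CompatF (key : Letter N → ℕ) (w : List (Letter N)) (i : Fin w.length → ℕ) : Prop :=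
  ∀ (j : ℕ) (h : j + 1 < w.length), i ⟨j, Nat.lt_of_succ_lt h⟩ = i ⟨j + 1, h⟩ →
    rowLE key (w.get ⟨j, Nat.lt_of_succ_lt h⟩) (w.get ⟨j + 1, h⟩)

theorem strictF_iff_compat {key : Letter N → ℕ} (hinj : Function.Injective key)
    {w : List (Letter N)} {i : Fin w.length → ℕ} (hM : MonoF i) :
    StrictF (DesSet key w) i ↔ CompatF key w i := by
  constructor
  · intro hs j h hij
    rw [rowLE_iff_not_descent hinj]
    intro hd
    have hmem : (j : ℕ) ∈ DesSet key w := ⟨h, hd⟩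
    have := hs ⟨j, Nat.lt_of_succ_lt h⟩ ⟨j + 1, h⟩ rfl hmem
    omega
  · intro hc j k hk hmem
    obtain ⟨h, hd⟩ := hmem
    have hj : j = ⟨(j : ℕ), Nat.lt_of_succ_lt h⟩ := by apply Fin.ext; rfl
    have hk' : k = ⟨(j : ℕ) + 1, h⟩ := by apply Fin.ext; exact hk
    have hle : i j ≤ i k := hM j k (by rw [Fin.le_def]; omega)
    rcases eq_or_lt_of_le hle with he | h2
    · exfalso
      have hcc := hc (j : ℕ) h (by rw [← hj, ← hk']; exact he)
      rw [rowLE_iff_not_descent hinj] at hcc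
      exact hcc hd
    · exact h2

theorem compat_pair {key : Letter N → ℕ} {w : List (Letter N)} {i : Fin w.length → ℕ}
    (hM : MonoF i) (hc : CompatF key w i) :
    ∀ (d j : ℕ) (hk : j + d + 1 < w.length),
      i ⟨j, by omega⟩ = i ⟨j + d + 1, hk⟩ →
      rowLE key (w.get ⟨j, by omega⟩) (w.get ⟨j + d + 1, hk⟩) := by
  intro d
  induction d with
  | zero => exact fun j hk hv => hc j hk hv
  | succ d ih =>
    intro j hk hv
    have h1 : j + d + 1 < w.length := by omega
    have e1 : i ⟨j, by omega⟩ ≤ i ⟨j + d + 1, h1⟩ := hM _ _ (by simp only [Fin.mk_le_mk]; omega)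
    have e2 : i ⟨j + d + 1, h1⟩ ≤ i ⟨j + (d + 1) + 1, hk⟩ := hM _ _ (by simp only [Fin.mk_le_mk]; omega)
    have hv1 : i ⟨j, by omega⟩ = i ⟨j + d + 1, h1⟩ := by omega
    have hv2 : i ⟨j + d + 1, h1⟩ = i ⟨j + d + 1 + 1, by omega⟩ := by
      have : i ⟨j + (d + 1) + 1, hk⟩ = i ⟨j + d + 1 + 1, by omega⟩ := rfl
      omega
    exact rowLE_trans (ih j h1 hv1) (hc (j + d + 1) (by omega) hv2)

theorem compat_pair' {key : Letter N → ℕ} {w : List (Letter N)} {i : Fin w.length → ℕ}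
    (hM : MonoF i) (hc : CompatF key w i) {p q : Fin w.length}
    (hpq : p < q) (hv : i p = i q) : rowLE key (w.get p) (w.get q) := by
  obtain ⟨d, hd⟩ : ∃ d, (q : ℕ) = (p : ℕ) + d + 1 := ⟨(q : ℕ) - (p : ℕ) - 1, by
    have := Fin.lt_def.mp hpq; omega⟩
  have hp : p = ⟨(p : ℕ), p.isLt⟩ := by apply Fin.ext; rfl
  have hq : q = ⟨(p : ℕ) + d + 1, by omega⟩ := by apply Fin.ext; exact hd
  rw [hp, hq] at hv ⊢
  exact compat_pair hM hc d (p : ℕ) _ hv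

/-! ## Shuffle connectivity -/
def SStep : List (Letter N) → List (Letter N) → Prop := fun a b =>
  ∃ (u v : List (Letter N)) (x y : Letter N),
    x.2 ≠ y.2 ∧ a = u ++ x :: y :: v ∧ b = u ++ y :: x :: v

def Conn : List (Letter N) → List (Letter N) → Prop := Relation.ReflTransGen SStep

theorem conn_mem {W : Finset (List (Letter N))} (hW : ShuffleClosed (↑W : Set (List (Letter N))))
    {a b : List (Letter N)} (h : Conn a b) (ha : a ∈ W) : b ∈ W := by
  induction h with
  | refl => exact ha
  | tail h1 h2 ih =>
    obtain ⟨u, v, x, y, hxy, rfl, rfl⟩ := h2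
    exact hW u v x y hxy ih

theorem sstep_symm {a b : List (Letter N)} (h : SStep a b) : SStep b a := by
  obtain ⟨u, v, x, y, hxy, rfl, rfl⟩ := h
  exact ⟨u, v, y, x, hxy.symm, rfl, rfl⟩

theorem conn_symm {a b : List (Letter N)} (h : Conn a b) : Conn b a := by
  induction h with
  | refl => exact Relation.ReflTransGen.refl
  | tail h1 h2 ih =>
    exact Relation.ReflTransGen.trans (Relation.ReflTransGen.single (sstep_symm h2)) ih

theorem conn_trans {a b c : List (Letter N)} (h1 : Conn a b) (h2 : Conn b c) : Conn a c :=
  Relation.ReflTransGen.trans h1 h2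

theorem conn_cons (x : Letter N) {a b : List (Letter N)} (h : Conn a b) :
    Conn (x :: a) (x :: b) := by
  induction h with
  | refl => exact Relation.ReflTransGen.refl
  | tail h1 h2 ih =>
    refine Relation.ReflTransGen.tail ih ?_
    obtain ⟨u, v, p, q, hpq, rfl, rfl⟩ := h2
    exact ⟨x :: u, v, p, q, hpq, rfl, rfl⟩

theorem conn_bubble (x : Letter N) (hx : x.2 = true) :
    ∀ (u v : List (Letter N)), (∀ y ∈ u, y.2 = false) → Conn (x :: (u ++ v)) (u ++ x :: v) := by
  intro u
  induction u with
  | nil => intro v _; exact Relation.ReflTransGen.refl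
  | cons y u ih =>
    intro v hu
    have hy : y.2 = false := hu y (by simp)
    have step1 : SStep (x :: y :: (u ++ v)) (y :: x :: (u ++ v)) :=
      ⟨[], u ++ v, x, y, by rw [hx, hy]; simp, rfl, rfl⟩
    refine Relation.ReflTransGen.head step1 ?_
    exact conn_cons y (ih v (fun z hz => hu z (by simp [hz])))

theorem conn_canon (a : List (Letter N)) :
    Conn a (a.filter (fun z => !z.2) ++ a.filter (fun z => z.2)) := by
  induction a with
  | nil => exact Relation.ReflTransGen.refl
  | cons x xs ih =>
    by_cases hx : x.2 = true
    · have h1 : Conn (x :: xs)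
          (x :: (xs.filter (fun z => !z.2) ++ xs.filter (fun z => z.2))) := conn_cons x ih
      have h2 := conn_bubble x hx (xs.filter (fun z => !z.2)) (xs.filter (fun z => z.2))
        (fun y hy => by
          have := List.of_mem_filter hy
          simpa using this)
      have h3 : (x :: xs).filter (fun z => !z.2) = xs.filter (fun z => !z.2) := by
        simp [List.filter_cons, hx]
      have h4 : (x :: xs).filter (fun z => z.2) = x :: xs.filter (fun z => z.2) := by
        simp [List.filter_cons, hx]
      rw [h3, h4]
      exact conn_trans h1 h2
    · have hx' : x.2 = false := Bool.not_eq_true _ |>.mp hx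
      have h3 : (x :: xs).filter (fun z => !z.2) = x :: xs.filter (fun z => !z.2) := by
        simp [List.filter_cons, hx']
      have h4 : (x :: xs).filter (fun z => z.2) = xs.filter (fun z => z.2) := by
        simp [List.filter_cons, hx']
      rw [h3, h4, List.cons_append]
      exact conn_cons x ih

theorem conn_of_filter {a b : List (Letter N)}
    (h1 : a.filter (fun z => !z.2) = b.filter (fun z => !z.2))
    (h2 : a.filter (fun z => z.2) = b.filter (fun z => z.2)) : Conn a b := by
  refine conn_trans (conn_canon a) ?_
  rw [h1, h2]
  exact conn_symm (conn_canon b)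

/-! ## Sorting indices -/
def rIdx {t : ℕ} (a b : Fin t → ℕ) (j k : Fin t) : Prop :=
  a j < a k ∨ (a j = a k ∧ (b j < b k ∨ (b j = b k ∧ (j : ℕ) ≤ (k : ℕ))))

instance {t : ℕ} (a b : Fin t → ℕ) (j k : Fin t) : Decidable (rIdx a b j k) := by
  unfold rIdx; exact inferInstance

theorem rIdx_antisymm {t : ℕ} {a b : Fin t → ℕ} {j k : Fin t}
    (h1 : rIdx a b j k) (h2 : rIdx a b k j) : j = k := by
  unfold rIdx at h1 h2; apply Fin.ext; omega

def sortIdx {t : ℕ} (a b : Fin t → ℕ) : List (Fin t) :=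
  (List.finRange t).mergeSort (fun j k => decide (rIdx a b j k))

theorem sortIdx_perm {t : ℕ} (a b : Fin t → ℕ) : List.Perm (sortIdx a b) (List.finRange t) :=
  List.mergeSort_perm _ _

theorem sortIdx_length {t : ℕ} (a b : Fin t → ℕ) : (sortIdx a b).length = t := by
  rw [(sortIdx_perm a b).length_eq, List.length_finRange]

theorem sortIdx_pairwise {t : ℕ} (a b : Fin t → ℕ) : (sortIdx a b).Pairwise (rIdx a b) := by
  have h := List.pairwise_mergeSort (le := fun j k => decide (rIdx a b j k))
    (fun p q r hpq hqr => by
      rw [decide_eq_true_eq] at hpq hqr ⊢; unfold rIdx at hpq hqr ⊢; omega)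
    (fun p q => by
      rw [Bool.or_eq_true, decide_eq_true_eq, decide_eq_true_eq]; unfold rIdx; omega)
    (List.finRange t)
  exact h.imp (fun hd => of_decide_eq_true hd)

theorem sortIdx_nodup {t : ℕ} (a b : Fin t → ℕ) : (sortIdx a b).Nodup :=
  (sortIdx_perm a b).symm.nodup (List.nodup_finRange t)

/-- the rearrangement of a monotone `a` along the sort is `a` itself -/
theorem sortIdx_mono_fix {t : ℕ} (a b : Fin t → ℕ) (hM : MonoF a) (j : Fin t) :
    a ((sortIdx a b).get (Fin.cast (sortIdx_length a b).symm j)) = a j := by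
  have hlen : (sortIdx a b).length = t := sortIdx_length a b
  have hinj : Function.Injective (fun j : Fin t => (sortIdx a b).get (Fin.cast hlen.symm j)) := by
    intro p q hpq
    have h1 : Function.Injective (sortIdx a b).get :=
      List.nodup_iff_injective_get.mp (sortIdx_nodup a b)
    exact Fin.cast_injective _ (h1 hpq)
  have hbij := Finite.injective_iff_bijective.mp hinj
  have hMono : MonoF (a ∘ (fun j : Fin t => (sortIdx a b).get (Fin.cast hlen.symm j))) := by
    intro p q hpq
    rcases eq_or_lt_of_le hpq with rfl | hlt
    · exact le_rfl
    · have hp : (p : ℕ) < (sortIdx a b).length := by omega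
      have hq : (q : ℕ) < (sortIdx a b).length := by omega
      have hpw := (List.pairwise_iff_getElem).mp (sortIdx_pairwise a b)
        (p : ℕ) (q : ℕ) hp hq hlt
      simp only [Function.comp_apply, List.get_eq_getElem, Fin.coe_cast]
      unfold rIdx at hpw; omega
  have hCards : ∀ v,
      (Finset.univ.filter (fun p =>
        (a ∘ (fun j : Fin t => (sortIdx a b).get (Fin.cast hlen.symm j))) p = v)).card
      = (Finset.univ.filter (fun p => a p = v)).card := by
    intro v
    refine Finset.card_equiv (Equiv.ofBijective _ hbij) (fun p => ?_)
    simp only [Finset.mem_filter, Finset.mem_univ, true_and, Function.comp_apply]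
    rfl
  have hfin := mono_unique hMono hM hCards
  have := congrFun hfin j
  simp only [Function.comp_apply] at this
  have hcast : Fin.cast (sortIdx_length a b).symm j = Fin.cast hlen.symm j := rfl
  rw [hcast]
  exact this

/-! ## Qlists and resorting -/
def Qlist (w : List (Letter N)) (i : Fin w.length → ℕ) : List (ℕ × Letter N) :=
  (List.finRange w.length).map (fun j => (i j, w.get j))

def lexR (key : Letter N → ℕ) (p q : ℕ × Letter N) : Prop :=
  p.1 < q.1 ∨ (p.1 = q.1 ∧ rowLE key p.2 q.2)

theorem rowLE_antisymm {key : Letter N → ℕ} {x y : Letter N}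
    (h1 : rowLE key x y) (h2 : rowLE key y x) : x = y := by
  rcases h1 with h1 | ⟨e1, _⟩
  · rcases h2 with h2 | ⟨e2, _⟩
    · omega
    · exact e2.symm
  · exact e1

theorem lexR_antisymm {key : Letter N → ℕ} :
    ∀ p q : ℕ × Letter N, lexR key p q → lexR key q p → p = q := by
  rintro ⟨a, x⟩ ⟨b, y⟩ (h1 | ⟨e1, hr1⟩) (h2 | ⟨e2, hr2⟩)
  · simp at h1 h2; omega
  · simp at h1 e2; omega
  · simp at h2 e1; omega
  · simp only at e1 hr1 hr2
    exact Prod.ext e1 (rowLE_antisymm hr1 hr2)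

theorem pairwise_Qlist {key : Letter N → ℕ} {w : List (Letter N)} {i : Fin w.length → ℕ}
    (hM : MonoF i) (hc : CompatF key w i) : (Qlist w i).Pairwise (lexR key) := by
  rw [Qlist, List.pairwise_map]
  rw [List.pairwise_iff_getElem]
  intro n1 n2 h1 h2 h12
  simp only [List.getElem_finRange, Fin.cast_mk]
  have hn1 : n1 < w.length := by simpa using h1
  have hn2 : n2 < w.length := by simpa using h2
  have hlt : (⟨n1, hn1⟩ : Fin w.length) < ⟨n2, hn2⟩ := by rw [Fin.lt_def]; exact h12
  have hle : i ⟨n1, hn1⟩ ≤ i ⟨n2, hn2⟩ := hM _ _ (le_of_lt hlt)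
  rcases eq_or_lt_of_le hle with he | hlt2
  · exact Or.inr ⟨he, compat_pair' hM hc hlt he⟩
  · exact Or.inl hlt2

theorem eq_of_qlist {key : Letter N → ℕ} {w w' : List (Letter N)}
    {i : Fin w.length → ℕ} {i' : Fin w'.length → ℕ}
    (hp : List.Perm (Qlist w i) (Qlist w' i'))
    (h1 : (Qlist w i).Pairwise (lexR key)) (h2 : (Qlist w' i').Pairwise (lexR key)) :
    w = w' := by
  haveI : IsAntisymm (ℕ × Letter N) (lexR key) := ⟨lexR_antisymm⟩
  have heq : Qlist w i = Qlist w' i' := hp.eq_of_pairwise (fun a b _ _ => lexR_antisymm a b) h1 h2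
  have hmap : (Qlist w i).map Prod.snd = (Qlist w' i').map Prod.snd := by rw [heq]
  have e1 : ∀ (u : List (Letter N)) (iu : Fin u.length → ℕ),
      (Qlist u iu).map Prod.snd = u := by
    intro u iu
    rw [Qlist, List.map_map]
    have h2' : (Prod.snd ∘ fun j => (iu j, u.get j)) = u.get := rfl
    rw [h2', List.map_get_finRange]
  rw [e1, e1] at hmap
  exact hmap

def AgreeK (k₁ k₂ : Letter N → ℕ) : Prop :=
  ∀ x y : Letter N, x.2 = y.2 → (k₁ x < k₁ y ↔ k₂ x < k₂ y)

def resortTo (key₂ : Letter N → ℕ) (w : List (Letter N)) (i : Fin w.length → ℕ) :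
    List (Letter N) :=
  (sortIdx i (fun j => key₂ (w.get j))).map w.get

theorem resortTo_length (key₂ : Letter N → ℕ) (w : List (Letter N)) (i : Fin w.length → ℕ) :
    (resortTo key₂ w i).length = w.length := by
  rw [resortTo, List.length_map, sortIdx_length]

section Resort
variable {k₁ k₂ : Letter N → ℕ} {m : ℕ →₀ ℕ} {w : List (Letter N)} {i : Fin w.length → ℕ}

theorem resort_getElem (k₂ : Letter N → ℕ) (w : List (Letter N)) (i : Fin w.length → ℕ)
    (n : ℕ) (hn : n < (resortTo k₂ w i).length) :
    (resortTo k₂ w i)[n]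
      = w.get ((sortIdx i (fun j => k₂ (w.get j)))[n]'(by
          have := resortTo_length k₂ w i
          rw [sortIdx_length]; omega)) := by
  simp only [resortTo, List.getElem_map]

theorem resort_fix (hM : MonoF i) (k₂ : Letter N → ℕ)
    (n : ℕ) (hn : n < (sortIdx i (fun j => k₂ (w.get j))).length) :
    i ((sortIdx i (fun j => k₂ (w.get j)))[n]) = i ⟨n, by rw [← sortIdx_length i (fun j => k₂ (w.get j))]; exact hn⟩ := by
  have h := sortIdx_mono_fix i (fun j => k₂ (w.get j)) hM
    ⟨n, by rw [← sortIdx_length i (fun j => k₂ (w.get j))]; exact hn⟩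
  simpa only [List.get_eq_getElem, Fin.cast_mk] using h

theorem resort_mono (hM : MonoF i) :
    MonoF (i ∘ Fin.cast (resortTo_length k₂ w i)) := by
  intro j k hjk
  exact hM _ _ (by rw [Fin.le_def, Fin.coe_cast, Fin.coe_cast]; exact Fin.le_def.mp hjk)

theorem resort_cont (hC : ContF m i) :
    ContF m (i ∘ Fin.cast (resortTo_length k₂ w i)) := by
  intro v
  rw [hC v]
  refine Finset.card_equiv (finCongr (resortTo_length k₂ w i).symm) (fun p => ?_)
  simp only [Finset.mem_filter, Finset.mem_univ, true_and, Function.comp_apply, finCongr_apply]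
  have : Fin.cast (resortTo_length k₂ w i) (Fin.cast (resortTo_length k₂ w i).symm p) = p :=
    Fin.ext (by simp)
  rw [this]

theorem resort_compat (h₂ : Function.Injective k₂) (hM : MonoF i) (hCp : CompatF k₁ w i) :
    CompatF k₂ (resortTo k₂ w i) (i ∘ Fin.cast (resortTo_length k₂ w i)) := by
  intro j h hij
  have hlenL : (sortIdx i (fun j => k₂ (w.get j))).length = w.length := sortIdx_length _ _
  have hlenR := resortTo_length k₂ w i
  have hj1 : j < (sortIdx i (fun j => k₂ (w.get j))).length := by omega
  have hj2 : j + 1 < (sortIdx i (fun j => k₂ (w.get j))).length := by omega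
  have hpw := (List.pairwise_iff_getElem).mp (sortIdx_pairwise i (fun j => k₂ (w.get j)))
    j (j + 1) hj1 hj2 (by omega)
  have hip := resort_fix hM k₂ j hj1
  have hiq := resort_fix hM k₂ (j + 1) hj2
  have hij' : i ((sortIdx i (fun j => k₂ (w.get j)))[j])
      = i ((sortIdx i (fun j => k₂ (w.get j)))[j+1]) := by
    have e1 : (i ∘ Fin.cast hlenR) ⟨j, Nat.lt_of_succ_lt h⟩ = i ⟨j, by omega⟩ := by
      simp only [Function.comp_apply, Fin.cast_mk]
    have e2 : (i ∘ Fin.cast hlenR) ⟨j + 1, h⟩ = i ⟨j + 1, by omega⟩ := by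
      simp only [Function.comp_apply, Fin.cast_mk]
    rw [hip, hiq]
    rw [e1, e2] at hij
    exact hij
  have hg1 : (resortTo k₂ w i).get ⟨j, Nat.lt_of_succ_lt h⟩
      = w.get ((sortIdx i (fun j => k₂ (w.get j)))[j]) := by
    rw [List.get_eq_getElem]; exact resort_getElem k₂ w i j (Nat.lt_of_succ_lt h)
  have hg2 : (resortTo k₂ w i).get ⟨j + 1, h⟩
      = w.get ((sortIdx i (fun j => k₂ (w.get j)))[j+1]) := by
    rw [List.get_eq_getElem]; exact resort_getElem k₂ w i (j + 1) h
  rw [hg1, hg2]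
  unfold rIdx at hpw
  rcases hpw with hlt | ⟨heq, hb⟩
  · omega
  · rcases hb with hblt | ⟨hbeq, _⟩
    · exact Or.inl hblt
    · have hxy : w.get ((sortIdx i (fun j => k₂ (w.get j)))[j])
          = w.get ((sortIdx i (fun j => k₂ (w.get j)))[j+1]) := h₂ hbeq
      by_cases hbar : (w.get ((sortIdx i (fun j => k₂ (w.get j)))[j])).2 = false
      · exact Or.inr ⟨hxy, hbar⟩
      · exfalso
        have hne : (sortIdx i (fun j => k₂ (w.get j)))[j]
            ≠ (sortIdx i (fun j => k₂ (w.get j)))[j+1] := by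
          intro hcon
          have := ((sortIdx_nodup i (fun j => k₂ (w.get j))).getElem_inj_iff).mp hcon
          omega
        have hbar' : (w.get ((sortIdx i (fun j => k₂ (w.get j)))[j])).2 = true :=
          Bool.not_eq_false _ |>.mp hbar
        rcases lt_or_gt_of_ne hne with hpq | hpq
        · have hrr := compat_pair' hM hCp hpq hij'
          rw [← hxy] at hrr
          rcases hrr with h' | ⟨_, h''⟩
          · omega
          · rw [hbar'] at h''; simp at h''
        · have hrr := compat_pair' hM hCp hpq hij'.symm
          rw [← hxy] at hrr
          rcases hrr with h' | ⟨_, h''⟩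
          · omega
          · rw [hbar'] at h''; simp at h''

theorem resort_qperm (hM : MonoF i) (k₂ : Letter N → ℕ) :
    List.Perm (Qlist (resortTo k₂ w i) (i ∘ Fin.cast (resortTo_length k₂ w i))) (Qlist w i) := by
  have hlenL : (sortIdx i (fun j => k₂ (w.get j))).length = w.length := sortIdx_length _ _
  have hlenR := resortTo_length k₂ w i
  have hstep : Qlist (resortTo k₂ w i) (i ∘ Fin.cast (resortTo_length k₂ w i))
      = (sortIdx i (fun j => k₂ (w.get j))).map (fun p => (i p, w.get p)) := by
    apply List.ext_getElem
    · simp only [Qlist, List.length_map, List.length_finRange]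
      omega
    · intro n hn1 hn2
      have hn3 : n < (resortTo k₂ w i).length := by
        simpa [Qlist] using hn1
      have hn4 : n < (sortIdx i (fun j => k₂ (w.get j))).length := by
        simpa using hn2
      have eL : (Qlist (resortTo k₂ w i) (i ∘ Fin.cast (resortTo_length k₂ w i)))[n]'hn1
          = (fun j => ((i ∘ Fin.cast (resortTo_length k₂ w i)) j, (resortTo k₂ w i).get j))
              ((List.finRange (resortTo k₂ w i).length)[n]'(by simpa using hn3)) :=
        List.getElem_map _
      have eR : ((sortIdx i (fun j => k₂ (w.get j))).map (fun p => (i p, w.get p)))[n]'hn2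
          = (fun p => (i p, w.get p)) ((sortIdx i (fun j => k₂ (w.get j)))[n]'hn4) :=
        List.getElem_map _
      rw [eL, eR]
      have eF : (List.finRange (resortTo k₂ w i).length)[n]'(by simpa using hn3)
          = ⟨n, hn3⟩ := Fin.ext (by simp [List.getElem_finRange])
      rw [eF]
      refine Prod.ext ?_ ?_
      · show i (Fin.cast (resortTo_length k₂ w i) ⟨n, hn3⟩) = i ((sortIdx i (fun j => k₂ (w.get j)))[n]'hn4)
        rw [Fin.cast_mk]
        exact (resort_fix hM k₂ n hn4).symm
      · show (resortTo k₂ w i).get ⟨n, hn3⟩ = w.get ((sortIdx i (fun j => k₂ (w.get j)))[n]'hn4)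
        rw [List.get_eq_getElem]
        exact resort_getElem k₂ w i n hn3
  rw [hstep]
  have hrfl : (List.finRange w.length).map (fun p => (i p, w.get p)) = Qlist w i := rfl
  rw [← hrfl]
  exact List.Perm.map _ (sortIdx_perm i _)

theorem resort_conn (hA : AgreeK k₁ k₂) (hM : MonoF i) (hCp : CompatF k₁ w i) :
    Conn w (resortTo k₂ w i) := by
  have hfilt : ∀ P : Letter N → Bool,
      (∀ z z' : Letter N, P z = true → P z' = true → z.2 = z'.2) →
      (resortTo k₂ w i).filter P = w.filter P := by
    intro P hsame
    have h1 : (resortTo k₂ w i).filter P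
        = ((sortIdx i (fun j => k₂ (w.get j))).filter (fun j => P (w.get j))).map w.get := by
      rw [resortTo, List.filter_map]
      rfl
    have h2 : w.filter P
        = ((List.finRange w.length).filter (fun j => P (w.get j))).map w.get := by
      conv_lhs => rw [← List.map_get_finRange w]
      rw [List.filter_map]
      rfl
    rw [h1, h2]
    congr 1
    haveI : IsAntisymm (Fin w.length) (rIdx i (fun j => k₂ (w.get j))) :=
      ⟨fun _ _ => rIdx_antisymm⟩
    refine (List.Perm.filter _ (sortIdx_perm i _)).eq_of_pairwise (le := rIdx i (fun j => k₂ (w.get j))) (fun _ _ _ _ => rIdx_antisymm) ?_ ?_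
    · exact List.Pairwise.sublist List.filter_sublist (sortIdx_pairwise i _)
    · have hfun : (fun j : Fin w.length => P (w.get j))
          = (fun j : Fin w.length => decide (P (w.get j) = true)) := by
        funext j; simp
      show List.Pairwise (rIdx i (fun j => k₂ (w.get j)))
        ((List.finRange w.length).filter (fun j => P (w.get j)))
      rw [hfun, List.pairwise_filter, List.pairwise_iff_getElem]
      intro n1 n2 h1' h2' h12
      simp only [List.getElem_finRange, Fin.cast_mk]
      intro hP1 hP2
      have hn1 : n1 < w.length := by simpa using h1'
      have hn2 : n2 < w.length := by simpa using h2'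
      have hcol := hsame _ _ (of_decide_eq_true hP1) (of_decide_eq_true hP2)
      have hlt : (⟨n1, hn1⟩ : Fin w.length) < ⟨n2, hn2⟩ := by rw [Fin.lt_def]; exact h12
      have hle := hM _ _ (le_of_lt hlt)
      unfold rIdx
      rcases eq_or_lt_of_le hle with he | hlt2
      · have hrow := compat_pair' hM hCp hlt he
        rcases hrow with hk | ⟨heq, _⟩
        · exact Or.inr ⟨he, Or.inl ((hA _ _ hcol).mp hk)⟩
        · refine Or.inr ⟨he, Or.inr ⟨?_, Nat.le_of_lt h12⟩⟩
          show k₂ (w.get ⟨n1, hn1⟩) = k₂ (w.get ⟨n2, hn2⟩)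
          rw [heq]
      · exact Or.inl hlt2
  apply conn_of_filter
  · exact (hfilt (fun z => !z.2) (fun z z' hz hz' => by
      simp at hz hz'; rw [hz, hz'])).symm
  · exact (hfilt (fun z => z.2) (fun z z' hz hz' => by
      rw [hz, hz'])).symm

end Resort

/-! ## Keys -/
theorem natKey_inj : Function.Injective (natKey (N := N)) := by
  rintro ⟨a, ba⟩ ⟨b, bb⟩ h
  unfold natKey at h
  have ha := a.isLt
  have hb := b.isLt
  cases ba <;> cases bb <;> simp at h <;>
    first
      | (exact Prod.ext (Fin.ext (by omega)) rfl)
      | (exact Prod.ext h rfl)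
      | (exact Prod.ext (Fin.ext h) rfl)
      | (exact absurd h (by omega))

theorem barKey_inj : Function.Injective (barKey N) := by
  rintro ⟨a, ba⟩ ⟨b, bb⟩ h
  unfold barKey at h
  have ha := a.isLt
  have hb := b.isLt
  cases ba <;> cases bb <;> simp at h <;>
    first
      | (exact Prod.ext (Fin.ext (by omega)) rfl)
      | (exact Prod.ext h rfl)
      | (exact Prod.ext (Fin.ext h) rfl)
      | (exact absurd h (by omega))

theorem agree_bar_nat : AgreeK (barKey N) (natKey (N := N)) := by
  rintro ⟨a, ba⟩ ⟨b, bb⟩ h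
  simp only at h
  subst h
  unfold barKey natKey
  cases ba <;> simp <;> omega

theorem AgreeK.symm {k₁ k₂ : Letter N → ℕ} (h : AgreeK k₁ k₂) : AgreeK k₂ k₁ :=
  fun x y hxy => (h x y hxy).symm

/-! ## Transfer -/
def GoodW (key : Letter N → ℕ) (m : ℕ →₀ ℕ) (w : List (Letter N)) : Prop :=
  ∃ i : Fin w.length → ℕ, MonoF i ∧ StrictF (DesSet key w) i ∧ ContF m i

def transfer (k₁ k₂ : Letter N → ℕ) (m : ℕ →₀ ℕ) (w : List (Letter N)) : List (Letter N) :=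
  if h : GoodW k₁ m w then resortTo k₂ w h.choose else w

theorem transfer_good {k₁ k₂ : Letter N → ℕ} (h₁ : Function.Injective k₁)
    (h₂ : Function.Injective k₂) (hA : AgreeK k₁ k₂) {m : ℕ →₀ ℕ} {w : List (Letter N)}
    (hg : GoodW k₁ m w) :
    Conn w (transfer k₁ k₂ m w) ∧ GoodW k₂ m (transfer k₁ k₂ m w) := by
  obtain ⟨hM, hS, hC⟩ := hg.choose_spec
  have hCp : CompatF k₁ w hg.choose := (strictF_iff_compat h₁ hM).mp hS
  rw [transfer, dif_pos hg]
  refine ⟨resort_conn hA hM hCp, ?_⟩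
  exact ⟨_, resort_mono hM,
    (strictF_iff_compat h₂ (resort_mono hM)).mpr (resort_compat h₂ hM hCp),
    resort_cont hC⟩

theorem transfer_roundtrip {k₁ k₂ : Letter N → ℕ} (h₁ : Function.Injective k₁)
    (h₂ : Function.Injective k₂) (hA : AgreeK k₁ k₂) {m : ℕ →₀ ℕ} {w : List (Letter N)}
    (hg : GoodW k₁ m w) :
    transfer k₂ k₁ m (transfer k₁ k₂ m w) = w := by
  obtain ⟨hM, hS, hC⟩ := hg.choose_spec
  have hCp : CompatF k₁ w hg.choose := (strictF_iff_compat h₁ hM).mp hS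
  have e1 : transfer k₁ k₂ m w = resortTo k₂ w hg.choose := by rw [transfer, dif_pos hg]
  have hM' := resort_mono (k₂ := k₂) (w := w) (i := hg.choose) hM
  have hC' := resort_cont (k₂ := k₂) (w := w) (i := hg.choose) hC
  have hCp' := resort_compat (k₂ := k₂) h₂ hM hCp
  have hS' := (strictF_iff_compat h₂ hM').mpr hCp'
  have hg' : GoodW k₂ m (resortTo k₂ w hg.choose) := ⟨_, hM', hS', hC'⟩
  rw [e1, transfer, dif_pos hg']
  obtain ⟨hM2, hS2, hC2⟩ := hg'.choose_spec
  have huniq : hg'.choose = hg.choose ∘ Fin.cast (resortTo_length k₂ w hg.choose) :=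
    mono_unique hM2 hM' (fun v => by rw [← hC2 v, ← hC' v])
  rw [huniq]
  have hq1 := resort_qperm (w := w) (i := hg.choose) hM k₂
  have hq2 := resort_qperm (w := resortTo k₂ w hg.choose)
    (i := hg.choose ∘ Fin.cast (resortTo_length k₂ w hg.choose)) hM' k₁
  have hCp'' := resort_compat (k₁ := k₂) (k₂ := k₁) h₁ hM' hCp'
  have hM'' := resort_mono (k₂ := k₁) hM'
  have hpw1 : (Qlist w hg.choose).Pairwise (lexR k₁) := pairwise_Qlist hM hCp
  have hpw2 := pairwise_Qlist hM'' hCp''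
  exact eq_of_qlist (key := k₁) (hq2.trans hq1) hpw2 hpw1

/-- For a shuffle closed (finite) set `W` of colored words, the
quasisymmetric generating functions of `W` for the big bar order and for the
natural order coincide: `Σ_{w∈W} Q_{Des_≺(w)} = Σ_{w∈W} Q_{Des_<(w)}`. -/
theorem shuffle_closed_descent_generating_functions (N : ℕ)
    (W : Finset (List (Letter N)))
    (hW : ShuffleClosed (↑W : Set (List (Letter N)))) :
    ∑ w ∈ W, Qqs w.length (DesSet (barKey N) w) =
      ∑ w ∈ W, Qqs w.length (DesSet natKey w) := by
  apply MvPowerSeries.ext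
  intro m
  rw [map_sum, map_sum]
  have hcoeff : ∀ (key : Letter N → ℕ) (w : List (Letter N)),
      MvPowerSeries.coeff m (Qqs w.length (DesSet key w))
        = if GoodW key m w then 1 else 0 := by
    intro key w
    rw [MvPowerSeries.coeff_apply]
    exact Qcoeff_eq_ite w.length (DesSet key w) m
  rw [Finset.sum_congr rfl (fun w _ => hcoeff (barKey N) w),
      Finset.sum_congr rfl (fun w _ => hcoeff natKey w),
      Finset.sum_boole, Finset.sum_boole]
  congr 1
  apply Finset.card_bij' (i := fun w _ => transfer (barKey N) natKey m w)
    (j := fun w _ => transfer natKey (barKey N) m w)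
  · intro a ha
    rw [Finset.mem_filter] at ha ⊢
    obtain ⟨hc, hgood⟩ := transfer_good barKey_inj natKey_inj agree_bar_nat ha.2
    exact ⟨conn_mem hW hc ha.1, hgood⟩
  · intro a ha
    rw [Finset.mem_filter] at ha ⊢
    obtain ⟨hc, hgood⟩ := transfer_good natKey_inj barKey_inj agree_bar_nat.symm ha.2
    exact ⟨conn_mem hW hc ha.1, hgood⟩
  · intro a ha
    rw [Finset.mem_filter] at ha
    exact transfer_roundtrip barKey_inj natKey_inj agree_bar_nat ha.2
  · intro a ha
    rw [Finset.mem_filter] at ha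
    exact transfer_roundtrip natKey_inj barKey_inj agree_bar_nat.symm ha.2

end NCS
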